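/- Let n ≥ 2 and σ₂ > 1, and let d be the probability vector on Fin n with d 0 = 1/σ₂ and d i = (σ₂ − 1)/(σ₂ (n − 1)) for i ≠ 0. Let p be a probability vector of the form p 0 = x and p i = (1 − x)/(n − 1) for all i ≠ 0, with 0 ≤ x ≤ 1, such that D₂(p‖d) = σ₂. Then the total variation distance satisfies D_TV(p, d) = (σ₂ − 1)/σ₂. In particular, the point mass δ₀ at index 0 satisfies D₂(δ₀‖d) = σ₂ and D_TV(δ₀, d) = (σ₂ − 1)/σ₂. -/

import Mathlib

lemma sum_head_tail {n : ℕ} (hn : 1 ≤ n) (A B : ℝ) :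
    ∑ i : Fin n, (if (i : ℕ) = 0 then A else B) = A + ((n : ℝ) - 1) * B := by
  obtain ⟨m, rfl⟩ := Nat.exists_eq_succ_of_ne_zero (by omega : n ≠ 0)
  rw [Fin.sum_univ_succ]
  simp [Fin.sum_const]

/-- Let `d 0 = 1/σ₂`, `d i = (σ₂−1)/(σ₂(n−1))` for `i ≠ 0`, and let `p` be a
probability vector with `p 0 = x`, `p i = (1−x)/(n−1)` for `i ≠ 0`, `0 ≤ x ≤ 1`,
such that `D₂(p‖d) = σ₂`. Then `D_TV(p, d) = (σ₂−1)/σ₂`; in particular the point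
mass `δ₀` at index 0 satisfies `D₂(δ₀‖d) = σ₂` and `D_TV(δ₀, d) = (σ₂−1)/σ₂`. -/
theorem tv_of_renyi2_from_representative (n : ℕ) (hn : 2 ≤ n)
    (σ₂ x : ℝ) (hσ : 1 < σ₂) (hx0 : 0 ≤ x) (hx1 : x ≤ 1)
    (d : Fin n → ℝ)
    (hd0 : ∀ i : Fin n, (i : ℕ) = 0 → d i = 1 / σ₂)
    (hdi : ∀ i : Fin n, (i : ℕ) ≠ 0 → d i = (σ₂ - 1) / (σ₂ * ((n : ℝ) - 1)))
    (p : Fin n → ℝ)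
    (hp0 : ∀ i : Fin n, (i : ℕ) = 0 → p i = x)
    (hpi : ∀ i : Fin n, (i : ℕ) ≠ 0 → p i = (1 - x) / ((n : ℝ) - 1))
    (hD2 : ∑ i, (p i) ^ 2 / d i = σ₂) :
    (1 / 2) * ∑ i, |p i - d i| = (σ₂ - 1) / σ₂ ∧
    (∑ i : Fin n, (if (i : ℕ) = 0 then (1 : ℝ) else 0) ^ 2 / d i = σ₂) ∧
    (1 / 2) * ∑ i : Fin n, |(if (i : ℕ) = 0 then (1 : ℝ) else 0) - d i| = (σ₂ - 1) / σ₂ := by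
  have hn1 : 1 ≤ n := le_trans (by norm_num) hn
  have hN : (2 : ℝ) ≤ (n : ℝ) := by exact_mod_cast hn
  have hN1 : (0 : ℝ) < (n : ℝ) - 1 := by linarith
  have hσ0 : (0 : ℝ) < σ₂ := by linarith
  have hσ1 : (0 : ℝ) < σ₂ - 1 := by linarith
  -- rewrite hD2
  have h1 : ∑ i, (p i) ^ 2 / d i =
      x ^ 2 / (1 / σ₂) + ((n : ℝ) - 1) *
        (((1 - x) / ((n : ℝ) - 1)) ^ 2 / ((σ₂ - 1) / (σ₂ * ((n : ℝ) - 1)))) := by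
    rw [← sum_head_tail hn1]
    apply Finset.sum_congr rfl
    intro i _
    by_cases h : (i : ℕ) = 0
    · simp [h, hp0 i h, hd0 i h]
    · simp [h, hpi i h, hdi i h]
  rw [h1] at hD2
  have hkey : x ^ 2 * (σ₂ - 1) + (1 - x) ^ 2 = σ₂ - 1 := by
    field_simp at hD2
    have hne : σ₂ * ((n : ℝ) - 1) ^ 2 ≠ 0 := by positivity
    apply mul_left_cancel₀ hne
    linear_combination (σ₂ * ((n : ℝ) - 1) ^ 2) * hD2
  have hsq : (x - 1 / σ₂ - (σ₂ - 1) / σ₂) * (x - 1 / σ₂ + (σ₂ - 1) / σ₂) = 0 := by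
    have hσne : σ₂ ≠ 0 := ne_of_gt hσ0
    field_simp
    nlinarith [hkey]
  have hbpos : (0 : ℝ) ≤ (σ₂ - 1) / σ₂ := le_of_lt (div_pos hσ1 hσ0)
  have habs : |x - 1 / σ₂| = (σ₂ - 1) / σ₂ := by
    rw [abs_eq hbpos]
    rcases mul_eq_zero.mp hsq with h | h
    · left; linarith
    · right; linarith
  refine ⟨?_, ?_, ?_⟩
  · have h2 : ∑ i, |p i - d i| =
        |x - 1 / σ₂| + ((n : ℝ) - 1) *
          |(1 - x) / ((n : ℝ) - 1) - (σ₂ - 1) / (σ₂ * ((n : ℝ) - 1))| := by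
      rw [← sum_head_tail hn1]
      apply Finset.sum_congr rfl
      intro i _
      by_cases h : (i : ℕ) = 0
      · simp [h, hp0 i h, hd0 i h]
      · simp [h, hpi i h, hdi i h]
    have h3 : (1 - x) / ((n : ℝ) - 1) - (σ₂ - 1) / (σ₂ * ((n : ℝ) - 1))
        = (-(x - 1 / σ₂)) / ((n : ℝ) - 1) := by
      field_simp
      ring
    rw [h2, h3, abs_div, abs_neg, abs_of_pos hN1]
    rw [mul_div_cancel₀ _ (ne_of_gt hN1)]
    rw [habs]; ring
  · have h2 : ∑ i : Fin n, (if (i : ℕ) = 0 then (1 : ℝ) else 0) ^ 2 / d i =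
        ∑ i : Fin n, (if (i : ℕ) = 0 then (1 : ℝ) ^ 2 / (1 / σ₂) else 0) := by
      apply Finset.sum_congr rfl
      intro i _
      by_cases h : (i : ℕ) = 0
      · simp [h, hd0 i h]
      · simp [h]
    rw [h2, sum_head_tail hn1]
    field_simp
    ring
  · have h2 : ∑ i : Fin n, |(if (i : ℕ) = 0 then (1 : ℝ) else 0) - d i| =
        ∑ i : Fin n, (if (i : ℕ) = 0 then |1 - 1 / σ₂|
          else |(0 : ℝ) - (σ₂ - 1) / (σ₂ * ((n : ℝ) - 1))|) := by
      apply Finset.sum_congr rfl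
      intro i _
      by_cases h : (i : ℕ) = 0
      · simp [h, hd0 i h]
      · simp [h, hdi i h]
    rw [h2, sum_head_tail hn1]
    have ha : |1 - 1 / σ₂| = (σ₂ - 1) / σ₂ := by
      rw [abs_of_nonneg]
      · field_simp
      · have : 1 / σ₂ ≤ 1 := by
          rw [div_le_one hσ0]; linarith
        linarith
    have hb : |(0 : ℝ) - (σ₂ - 1) / (σ₂ * ((n : ℝ) - 1))| = (σ₂ - 1) / (σ₂ * ((n : ℝ) - 1)) := by
      rw [zero_sub, abs_neg, abs_of_nonneg]
      positivity
    rw [ha, hb]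
    field_simp
    ring
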